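/- Let H ⊆ S_N be a subgroup acting transitively on {1,…,N}, G = H × {-1,1}^N acting on ℝ^N by (σ,ε)(x) = (ε_i x_{σ(i)})_i. Let b ∈ ℝ^N, φ_i(g) = (gb)_i, and let P be the orthogonal projection in L²(G) (normalized counting measure) onto a subspace Z of dimension ≤ n. Then (Σ_{i=1}^N ‖Pφ_i‖²_{L²(G)})^{1/2} ≤ n^{1/2}·‖b‖_2 / N^{1/2}. -/

import Mathlib

open Finset Module

lemma aux_bessel13 {E : Type*} [NormedAddCommGroup E] [InnerProductSpace ℝ E]
    [FiniteDimensional ℝ E] (K : Submodule ℝ E) {n : ℕ} (hK : finrank ℝ K ≤ n)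
    {ι : Type*} [Fintype ι] (φ : ι → E)
    (horth : ∀ i j, i ≠ j → inner ℝ (φ i) (φ j) = (0:ℝ))
    (ρ : ℝ) (hρ0 : 0 ≤ ρ) (hρ : ∀ i, ‖φ i‖ ^ 2 = ρ) :
    ∑ i, ‖(Submodule.orthogonalProjection K (φ i) : E)‖ ^ 2 ≤ n * ρ := by
  classical
  rcases eq_or_lt_of_le hρ0 with h0 | hρpos
  · have hz : ∀ i, φ i = 0 := fun i => by
      have := hρ i
      rw [← h0] at this
      rwa [pow_eq_zero_iff (by norm_num), norm_eq_zero] at this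
    simp [hz, ← h0]
  have hsq : Real.sqrt ρ ^ 2 = ρ := Real.sq_sqrt hρ0
  have hsne : Real.sqrt ρ ≠ 0 := by positivity
  set e := stdOrthonormalBasis ℝ K with he
  set ψ : ι → E := fun i => (Real.sqrt ρ)⁻¹ • φ i with hψ
  have hφψ : ∀ i, φ i = Real.sqrt ρ • ψ i := fun i => by
    simp [hψ, smul_smul, mul_inv_cancel₀ hsne]
  have hψorth : Orthonormal ℝ ψ := by
    rw [orthonormal_iff_ite]
    intro i j
    by_cases hij : i = j
    · subst hij
      rw [if_pos rfl, hψ]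
      rw [real_inner_smul_left, real_inner_smul_right, real_inner_self_eq_norm_sq, hρ i, ← hsq]
      field_simp
      rw [Real.sqrt_sq (Real.sqrt_nonneg _)]
    · simp [hψ, real_inner_smul_left, real_inner_smul_right, horth i j hij, hij]
  have hPnorm : ∀ v : E, ‖(Submodule.orthogonalProjection K v : E)‖ ^ 2
      = ∑ k, (inner ℝ ((e k : K) : E) v : ℝ) ^ 2 := by
    intro v
    set p := Submodule.orthogonalProjection K v with hp
    have h1 : ∀ k, (inner ℝ ((e k : K) : E) v : ℝ) = inner ℝ (e k) p := by
      intro k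
      have h0 : inner ℝ (v - (p : E)) ((e k : K) : E) = (0:ℝ) :=
        K.starProjection_inner_eq_zero v _ (e k).2
      rw [inner_sub_left, sub_eq_zero] at h0
      rw [real_inner_comm, h0, real_inner_comm]
      rfl
    calc ‖(p : E)‖ ^ 2 = ‖p‖ ^ 2 := by rw [Submodule.norm_coe]
      _ = inner ℝ p p := (real_inner_self_eq_norm_sq p).symm
      _ = ∑ k, (inner ℝ p (e k) : ℝ) * inner ℝ (e k) p := (e.sum_inner_mul_inner p p).symm
      _ = ∑ k, (inner ℝ ((e k : K) : E) v : ℝ) ^ 2 := by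
          refine Finset.sum_congr rfl fun k _ => ?_
          rw [h1 k, real_inner_comm p (e k), sq]
  calc ∑ i, ‖(Submodule.orthogonalProjection K (φ i) : E)‖ ^ 2
      = ∑ i, ∑ k, (inner ℝ ((e k : K) : E) (φ i) : ℝ) ^ 2 := by
        exact Finset.sum_congr rfl fun i _ => hPnorm (φ i)
    _ = ∑ k, ∑ i, (inner ℝ ((e k : K) : E) (φ i) : ℝ) ^ 2 := Finset.sum_comm
    _ = ∑ k, ρ * ∑ i, ‖(inner ℝ (ψ i) ((e k : K) : E) : ℝ)‖ ^ 2 := by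
        refine Finset.sum_congr rfl fun k _ => ?_
        rw [Finset.mul_sum]
        refine Finset.sum_congr rfl fun i _ => ?_
        rw [hφψ i, real_inner_smul_right, mul_pow, hsq, real_inner_comm,
          Real.norm_eq_abs, sq_abs]
    _ ≤ ∑ k : Fin (finrank ℝ K), ρ * 1 := by
        refine Finset.sum_le_sum fun k _ => ?_
        refine mul_le_mul_of_nonneg_left ?_ hρ0
        have := hψorth.sum_inner_products_le (𝕜 := ℝ) ((e k : K) : E) (s := Finset.univ)
        calc ∑ i, ‖(inner ℝ (ψ i) ((e k : K) : E) : ℝ)‖ ^ 2 ≤ ‖((e k : K) : E)‖ ^ 2 := this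
          _ = 1 := by rw [Submodule.norm_coe, e.orthonormal.1 k]; norm_num
    _ = (finrank ℝ K : ℝ) * ρ := by simp [mul_comm]
    _ ≤ n * ρ := by
        refine mul_le_mul_of_nonneg_right ?_ hρ0
        exact_mod_cast hK

lemma my_sign_sum13 {N : ℕ} {i j : Fin N} (h : i ≠ j) :
    ∑ ε : Fin N → ℤˣ, ((ε i : ℤ) : ℝ) * ((ε j : ℤ) : ℝ) = 0 := by
  classical
  set F : (Fin N → ℤˣ) → ℝ := fun ε => ((ε i : ℤ) : ℝ) * ((ε j : ℤ) : ℝ) with hF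
  set e : (Fin N → ℤˣ) → (Fin N → ℤˣ) := fun ε => Function.update ε i (-(ε i)) with he
  have hinv : Function.Involutive e := by
    intro ε
    funext k
    by_cases hk : k = i
    · subst hk; simp [he]
    · simp [he, Function.update_of_ne hk]
  have h1 : ∑ ε, F (e ε) = ∑ ε, F ε :=
    Fintype.sum_bijective e hinv.bijective (F ∘ e) F (fun _ => rfl)
  have h2 : ∀ ε, F (e ε) = - F ε := by
    intro ε
    simp only [hF, he, Function.update_self, Function.update_of_ne (Ne.symm h)]
    push_cast
    ring
  have h3 : ∑ ε, F (e ε) = - ∑ ε, F ε := by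
    rw [Finset.sum_congr rfl fun ε _ => h2 ε, Finset.sum_neg_distrib]
  have := h1.symm.trans h3
  linarith

lemma my_fiber13 {N : ℕ} (H : Subgroup (Equiv.Perm (Fin N))) [Fintype H]
    (htrans : ∀ i j : Fin N, ∃ σ ∈ H, σ i = j) (b : Fin N → ℝ) (i : Fin N) :
    (N : ℝ) * ∑ σ : H, b ((σ : Equiv.Perm (Fin N)) i) ^ 2
      = (Fintype.card H : ℝ) * ∑ l, b l ^ 2 := by
  classical
  set c : Fin N → ℕ := fun j => (univ.filter fun σ : H => (σ : Equiv.Perm (Fin N)) i = j).card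
    with hc
  have hceq : ∀ j k : Fin N, c j = c k := by
    intro j k
    obtain ⟨τ, hτ, hτjk⟩ := htrans j k
    refine Finset.card_bij (fun σ _ => (⟨τ, hτ⟩ : H) * σ) ?_ ?_ ?_
    · intro σ hσ
      simp only [mem_filter, mem_univ, true_and] at hσ ⊢
      simp [Subgroup.coe_mul, Equiv.Perm.mul_apply, hσ, hτjk]
    · intro σ₁ _ σ₂ _ hs
      exact mul_left_cancel hs
    · intro σ' hσ'
      simp only [mem_filter, mem_univ, true_and] at hσ'
      refine ⟨(⟨τ, hτ⟩ : H)⁻¹ * σ', ?_, ?_⟩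
      · simp only [mem_filter, mem_univ, true_and]
        have : τ ((((⟨τ, hτ⟩ : H)⁻¹ * σ' : H) : Equiv.Perm (Fin N)) i) = τ j := by
          simp [Subgroup.coe_mul, Equiv.Perm.mul_apply, hσ', hτjk]
        exact τ.injective this
      · simp
  have hfib : ∑ σ : H, b ((σ : Equiv.Perm (Fin N)) i) ^ 2 = ∑ j, (c j : ℝ) * b j ^ 2 := by
    rw [← Finset.sum_fiberwise univ (fun σ : H => (σ : Equiv.Perm (Fin N)) i)
      (fun σ => b ((σ : Equiv.Perm (Fin N)) i) ^ 2)]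
    refine Finset.sum_congr rfl fun j _ => ?_
    rw [Finset.sum_congr rfl (fun σ hσ => by rw [(mem_filter.mp hσ).2]), sum_const,
      nsmul_eq_mul]
  have hcard : ∑ j, c j = Fintype.card H := by
    rw [← Finset.card_univ, Finset.card_eq_sum_card_fiberwise
      (f := fun σ : H => (σ : Equiv.Perm (Fin N)) i) (t := univ) (fun _ _ => mem_univ _)]
  have hconst : ∀ j, c j = c i := fun j => hceq j i
  rw [hfib]
  have h1 : ∑ j, (c j : ℝ) * b j ^ 2 = (c i : ℝ) * ∑ l, b l ^ 2 := by
    rw [Finset.mul_sum]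
    exact Finset.sum_congr rfl fun j _ => by rw [hconst j]
  have h2 : (Fintype.card H : ℝ) = (N : ℝ) * (c i : ℝ) := by
    rw [← hcard]
    push_cast
    rw [Finset.sum_congr rfl fun j _ => by rw [hconst j]]
    simp [Finset.card_univ, mul_comm]
  rw [h1, h2]
  ring

/-- Let `H ⊆ S_N` be a subgroup acting transitively on `{1,…,N}`, `G = H × {-1,1}^N`
acting on `ℝ^N` by `(σ,ε)(x)_i = ε_i x_{σ(i)}`, `b ∈ ℝ^N`, `φ_i(g) = (gb)_i`, and `P`
the orthogonal projection in `L²(G)` (normalized counting measure) onto a subspace of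
dimension at most `n`. Then `(∑_i ‖Pφ_i‖²_{L²(G)})^{1/2} ≤ n^{1/2}‖b‖₂/N^{1/2}`. -/
theorem stmt13 (N n : ℕ) (H : Subgroup (Equiv.Perm (Fin N))) [Fintype H]
    (htrans : ∀ i j : Fin N, ∃ σ ∈ H, σ i = j)
    (b : Fin N → ℝ)
    (K : Submodule ℝ (EuclideanSpace ℝ (H × (Fin N → ℤˣ))))
    (hK : Module.finrank ℝ K ≤ n)
    (φ : Fin N → EuclideanSpace ℝ (H × (Fin N → ℤˣ)))
    (hφ : ∀ i g, φ i g = ((g.2 i : ℤ) : ℝ) * b ((g.1 : Equiv.Perm (Fin N)) i)) :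
    Real.sqrt (∑ i : Fin N, (Fintype.card (H × (Fin N → ℤˣ)) : ℝ)⁻¹ *
        ∑ g, ((Submodule.orthogonalProjection K (φ i) : EuclideanSpace ℝ (H × (Fin N → ℤˣ))) g) ^ 2)
      ≤ Real.sqrt n * Real.sqrt (∑ l, (b l) ^ 2) / Real.sqrt N := by
  classical
  rcases Nat.eq_zero_or_pos N with hN | hN
  · subst hN
    simp
  have hGpos : 0 < Fintype.card (H × (Fin N → ℤˣ)) := Fintype.card_pos
  set cG := (Fintype.card (H × (Fin N → ℤˣ)) : ℝ) with hcG
  have hcGpos : (0:ℝ) < cG := by rw [hcG]; exact_mod_cast hGpos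
  have hNpos : (0:ℝ) < N := by exact_mod_cast hN
  have hinner : ∀ x y : EuclideanSpace ℝ (H × (Fin N → ℤˣ)),
      (inner ℝ x y : ℝ) = ∑ g, x g * y g := fun x y => by
    simp [PiLp.inner_apply, RCLike.inner_apply, conj_trivial]
    exact Finset.sum_congr rfl fun g _ => mul_comm _ _
  have hnormsum : ∀ x : EuclideanSpace ℝ (H × (Fin N → ℤˣ)),
      ∑ g, x g ^ 2 = ‖x‖ ^ 2 := fun x => by
    rw [← real_inner_self_eq_norm_sq, hinner]
    exact Finset.sum_congr rfl fun g _ => sq (x g)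
  set S := ∑ l, b l ^ 2 with hS
  have hSnn : 0 ≤ S := Finset.sum_nonneg fun l _ => sq_nonneg _
  set ρ := cG * S / N with hρdef
  have hρ0 : 0 ≤ ρ := by positivity
  have horth : ∀ i j, i ≠ j → inner ℝ (φ i) (φ j) = (0:ℝ) := by
    intro i j hij
    rw [hinner, Fintype.sum_prod_type]
    have hz : ∀ σ : H, ∑ ε : Fin N → ℤˣ, φ i (σ, ε) * φ j (σ, ε) = 0 := by
      intro σ
      have h1 : ∀ ε : Fin N → ℤˣ, φ i (σ, ε) * φ j (σ, ε)
          = (b ((σ : Equiv.Perm (Fin N)) i) * b ((σ : Equiv.Perm (Fin N)) j))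
            * (((ε i : ℤ) : ℝ) * ((ε j : ℤ) : ℝ)) := by
        intro ε
        rw [hφ i (σ, ε), hφ j (σ, ε)]
        ring
      rw [Finset.sum_congr rfl fun ε _ => h1 ε, ← Finset.mul_sum, my_sign_sum13 hij, mul_zero]
    rw [Finset.sum_congr rfl fun σ _ => hz σ, Finset.sum_const, smul_zero]
  have hnorm : ∀ i, ‖φ i‖ ^ 2 = ρ := by
    intro i
    rw [← hnormsum, Fintype.sum_prod_type]
    have h1 : ∀ σ : H, ∑ ε : Fin N → ℤˣ, φ i (σ, ε) ^ 2
        = (Fintype.card (Fin N → ℤˣ) : ℝ) * b ((σ : Equiv.Perm (Fin N)) i) ^ 2 := by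
      intro σ
      have h2 : ∀ ε : Fin N → ℤˣ, φ i (σ, ε) ^ 2 = b ((σ : Equiv.Perm (Fin N)) i) ^ 2 := by
        intro ε
        rw [hφ i (σ, ε), mul_pow]
        have h3 : ((ε i : ℤ) : ℝ) ^ 2 = 1 := by
          rcases Int.units_eq_one_or (ε i) with h | h <;> rw [h] <;> norm_num
        rw [h3, one_mul]
      rw [Finset.sum_congr rfl fun ε _ => h2 ε, Finset.sum_const, nsmul_eq_mul,
        Finset.card_univ]
    rw [Finset.sum_congr rfl fun σ _ => h1 σ, ← Finset.mul_sum]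
    have hmf := my_fiber13 H htrans b i
    have hcards : cG = (Fintype.card H : ℝ) * (Fintype.card (Fin N → ℤˣ) : ℝ) := by
      rw [hcG]
      push_cast [Fintype.card_prod]
      ring
    have hNne : (N : ℝ) ≠ 0 := ne_of_gt hNpos
    rw [hρdef, hcards, eq_div_iff hNne]
    linear_combination (Fintype.card (Fin N → ℤˣ) : ℝ) * hmf
  have key := aux_bessel13 K hK φ horth ρ hρ0 hnorm
  have hLHS : ∑ i : Fin N, cG⁻¹ *
      ∑ g, ((Submodule.orthogonalProjection K (φ i) : EuclideanSpace ℝ (H × (Fin N → ℤˣ))) g) ^ 2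
      = cG⁻¹ * ∑ i : Fin N,
        ‖(Submodule.orthogonalProjection K (φ i) : EuclideanSpace ℝ (H × (Fin N → ℤˣ)))‖ ^ 2 := by
    rw [Finset.mul_sum]
    exact Finset.sum_congr rfl fun i _ => by rw [hnormsum]
  rw [hLHS]
  have hle : cG⁻¹ * ∑ i : Fin N,
      ‖(Submodule.orthogonalProjection K (φ i) : EuclideanSpace ℝ (H × (Fin N → ℤˣ)))‖ ^ 2
      ≤ (n : ℝ) * S / N := by
    have heq : cG⁻¹ * ((n : ℝ) * ρ) = (n : ℝ) * S / N := by
      rw [hρdef]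
      field_simp
    calc cG⁻¹ * ∑ i : Fin N,
        ‖(Submodule.orthogonalProjection K (φ i) : EuclideanSpace ℝ (H × (Fin N → ℤˣ)))‖ ^ 2
        ≤ cG⁻¹ * ((n : ℝ) * ρ) := mul_le_mul_of_nonneg_left key (inv_nonneg.mpr hcGpos.le)
      _ = (n : ℝ) * S / N := heq
  calc Real.sqrt (cG⁻¹ * ∑ i : Fin N,
        ‖(Submodule.orthogonalProjection K (φ i) : EuclideanSpace ℝ (H × (Fin N → ℤˣ)))‖ ^ 2)
      ≤ Real.sqrt ((n : ℝ) * S / N) := Real.sqrt_le_sqrt hle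
    _ = Real.sqrt n * Real.sqrt S / Real.sqrt N := by
        rw [Real.sqrt_div (by positivity), Real.sqrt_mul (by positivity)]
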